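/- Let λ ∈ ℂ∖{0,1,−1} and n ≥ 1, and let B = J(λ,n) ⊕ J(λ⁻¹,n) ∈ SL(2n,ℂ) (block diagonal). Then B is reversible in SL(2n,ℂ) for every n. Moreover, B is strongly reversible in SL(2n,ℂ) (a product of two involutions of SL(2n,ℂ)) if and only if n is even. -/

import Mathlib

open Matrix

/-- The Jordan block `J(λ, m)`. -/
noncomputable def jordanBlock (lam : ℂ) (m : ℕ) : Matrix (Fin m) (Fin m) ℂ :=
  Matrix.of fun i j => if (j : ℕ) = (i : ℕ) then lam
    else if (j : ℕ) = (i : ℕ) + 1 then 1 else 0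

namespace JordanAux

variable {n : ℕ}

lemma sum_ite_nat (c : ℕ) (f : Fin n → ℂ) :
    (∑ k : Fin n, if (k : ℕ) = c then f k else 0) = if h : c < n then f ⟨c, h⟩ else 0 := by
  split_ifs with h
  · rw [Finset.sum_eq_single ⟨c, h⟩]
    · simp
    · intro k _ hk
      rw [if_neg]
      intro hc
      exact hk (Fin.ext hc)
    · simp
  · apply Finset.sum_eq_zero
    intro k _
    rw [if_neg]
    intro hc
    exact h (hc ▸ k.isLt)

lemma jordan_mul_apply (mu : ℂ) (M : Matrix (Fin n) (Fin n) ℂ) (i j : Fin n) :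
    (jordanBlock mu n * M) i j
      = mu * M i j + (if h : (i : ℕ) + 1 < n then M ⟨(i : ℕ) + 1, h⟩ j else 0) := by
  rw [Matrix.mul_apply]
  have hsummand : ∀ k : Fin n, jordanBlock mu n i k * M k j
      = (if (k : ℕ) = (i : ℕ) then mu * M k j else 0)
        + (if (k : ℕ) = (i : ℕ) + 1 then M k j else 0) := by
    intro k
    simp only [jordanBlock, Matrix.of_apply]
    split_ifs <;> first | ring1 | (exfalso; omega)
  rw [Finset.sum_congr rfl fun k _ => hsummand k, Finset.sum_add_distrib,
    sum_ite_nat, sum_ite_nat, dif_pos i.isLt]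

lemma mul_jordan_apply (mu : ℂ) (M : Matrix (Fin n) (Fin n) ℂ) (i j : Fin n) :
    (M * jordanBlock mu n) i j
      = mu * M i j + (if 0 < (j : ℕ) then M i ⟨(j : ℕ) - 1, by omega⟩ else 0) := by
  rw [Matrix.mul_apply]
  by_cases hj : 0 < (j : ℕ)
  · have hsummand : ∀ k : Fin n, M i k * jordanBlock mu n k j
        = (if (k : ℕ) = (j : ℕ) then mu * M i k else 0)
          + (if (k : ℕ) = (j : ℕ) - 1 then M i k else 0) := by
      intro k
      simp only [jordanBlock, Matrix.of_apply]
      split_ifs <;> first | ring1 | (exfalso; omega)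
    rw [Finset.sum_congr rfl fun k _ => hsummand k, Finset.sum_add_distrib,
      sum_ite_nat, sum_ite_nat, dif_pos j.isLt, dif_pos (show (j : ℕ) - 1 < n by omega),
      if_pos hj]
  · have hsummand : ∀ k : Fin n, M i k * jordanBlock mu n k j
        = (if (k : ℕ) = (j : ℕ) then mu * M i k else 0) := by
      intro k
      simp only [jordanBlock, Matrix.of_apply]
      split_ifs <;> first | ring1 | (exfalso; omega)
    rw [Finset.sum_congr rfl fun k _ => hsummand k, sum_ite_nat, dif_pos j.isLt,
      if_neg hj]
    simp


noncomputable def smat (lam : ℂ) (n : ℕ) : Matrix (Fin n) (Fin n) ℂ :=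
  Matrix.of fun i j => if (i : ℕ) ≤ (j : ℕ) then
    (-1) ^ (n - 1 - (i : ℕ)) * lam ^ ((i : ℕ) + (j : ℕ))
      * ((n - 1 - (i : ℕ)).choose ((j : ℕ) - (i : ℕ)) : ℂ)
  else 0

lemma key {lam : ℂ} (hlam0 : lam ≠ 0) :
    jordanBlock lam n * smat lam n * jordanBlock lam⁻¹ n = smat lam n := by
  ext i j
  have hi := i.isLt
  have hj := j.isLt
  rw [mul_jordan_apply]
  by_cases hj1 : 0 < (j : ℕ)
  · rw [if_pos hj1, jordan_mul_apply, jordan_mul_apply]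
    by_cases hi1 : (i : ℕ) + 1 < n
    · rw [dif_pos hi1, dif_pos hi1]
      simp only [smat, Matrix.of_apply, Fin.val_mk]
      rcases show (j:ℕ) < ↑i ∨ (j:ℕ) = ↑i ∨ (j:ℕ) = ↑i + 1 ∨ (i:ℕ) + 2 ≤ ↑j by omega
        with hc | hc | hc | hc
      · rw [if_neg (by omega : ¬ ((i:ℕ) ≤ ↑j)), if_neg (by omega : ¬ ((i:ℕ) + 1 ≤ ↑j)),
          if_neg (by omega : ¬ ((i:ℕ) ≤ (j:ℕ) - 1)),
          if_neg (by omega : ¬ ((i:ℕ) + 1 ≤ (j:ℕ) - 1))]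
        simp
      · rw [if_pos (by omega : (i:ℕ) ≤ ↑j), if_neg (by omega : ¬ ((i:ℕ) + 1 ≤ ↑j)),
          if_neg (by omega : ¬ ((i:ℕ) ≤ (j:ℕ) - 1)),
          if_neg (by omega : ¬ ((i:ℕ) + 1 ≤ (j:ℕ) - 1))]
        field_simp
        ring1
      · -- j = i + 1
        obtain ⟨a, ha⟩ : ∃ a, n - 1 - (i:ℕ) = a + 1 := ⟨n - 2 - (i:ℕ), by omega⟩
        obtain ⟨K, hK⟩ : ∃ K, (i:ℕ) + (j:ℕ) = K + 1 := ⟨(i:ℕ) + (j:ℕ) - 1, by omega⟩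
        have e1 : n - 1 - ((i:ℕ) + 1) = a := by omega
        have e2 : (j:ℕ) - (i:ℕ) = 1 := by omega
        have e3 : (j:ℕ) - ((i:ℕ) + 1) = 0 := by omega
        have e4 : (j:ℕ) - 1 - (i:ℕ) = 0 := by omega
        have e5 : (i:ℕ) + 1 + (j:ℕ) = K + 2 := by omega
        have e6 : (i:ℕ) + ((j:ℕ) - 1) = K := by omega
        rw [if_pos (by omega : (i:ℕ) ≤ ↑j), if_pos (by omega : (i:ℕ) + 1 ≤ ↑j),
          if_pos (by omega : (i:ℕ) ≤ (j:ℕ) - 1),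
          if_neg (by omega : ¬ ((i:ℕ) + 1 ≤ (j:ℕ) - 1)),
          ha, e1, e2, e3, e4, hK, e5, e6, Nat.choose_zero_right, Nat.choose_zero_right,
          Nat.choose_one_right]
        push_cast
        field_simp
        ring1
      · -- generic: j ≥ i + 2
        obtain ⟨a, ha⟩ : ∃ a, n - 1 - (i:ℕ) = a + 1 := ⟨n - 2 - (i:ℕ), by omega⟩
        obtain ⟨c, hcc⟩ : ∃ c, (j:ℕ) - (i:ℕ) = c + 2 := ⟨(j:ℕ) - (i:ℕ) - 2, by omega⟩
        obtain ⟨K, hK⟩ : ∃ K, (i:ℕ) + (j:ℕ) = K + 1 := ⟨(i:ℕ) + (j:ℕ) - 1, by omega⟩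
        have e1 : n - 1 - ((i:ℕ) + 1) = a := by omega
        have e3 : (j:ℕ) - ((i:ℕ) + 1) = c + 1 := by omega
        have e4 : (j:ℕ) - 1 - (i:ℕ) = c + 1 := by omega
        have e4' : (j:ℕ) - 1 - ((i:ℕ) + 1) = c := by omega
        have e5 : (i:ℕ) + 1 + (j:ℕ) = K + 2 := by omega
        have e6 : (i:ℕ) + ((j:ℕ) - 1) = K := by omega
        have e7 : (i:ℕ) + 1 + ((j:ℕ) - 1) = K + 1 := by omega
        rw [if_pos (by omega : (i:ℕ) ≤ ↑j), if_pos (by omega : (i:ℕ) + 1 ≤ ↑j),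
          if_pos (by omega : (i:ℕ) ≤ (j:ℕ) - 1),
          if_pos (by omega : (i:ℕ) + 1 ≤ (j:ℕ) - 1),
          ha, e1, hcc, e3, e4, e4', hK, e5, e6, e7, Nat.choose_succ_succ a c]
        push_cast [Nat.choose_succ_succ (a) (c + 1)]
        field_simp
        ring1
    · rw [dif_neg hi1, dif_neg hi1]
      simp only [smat, Matrix.of_apply, Fin.val_mk]
      rcases show (j:ℕ) < ↑i ∨ (j:ℕ) = ↑i by omega with hc | hc
      · rw [if_neg (by omega : ¬ ((i:ℕ) ≤ ↑j)),
          if_neg (by omega : ¬ ((i:ℕ) ≤ (j:ℕ) - 1))]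
        simp
      · rw [if_pos (by omega : (i:ℕ) ≤ ↑j),
          if_neg (by omega : ¬ ((i:ℕ) ≤ (j:ℕ) - 1))]
        field_simp
        ring1
  · rw [if_neg hj1, jordan_mul_apply]
    by_cases hi1 : (i : ℕ) + 1 < n
    · rw [dif_pos hi1]
      simp only [smat, Matrix.of_apply, Fin.val_mk]
      rcases show (0:ℕ) < ↑i ∨ (i:ℕ) = 0 by omega with hc | hc
      · rw [if_neg (by omega : ¬ ((i:ℕ) ≤ ↑j)),
          if_neg (by omega : ¬ ((i:ℕ) + 1 ≤ ↑j))]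
        simp
      · rw [if_pos (by omega : (i:ℕ) ≤ ↑j),
          if_neg (by omega : ¬ ((i:ℕ) + 1 ≤ ↑j))]
        field_simp
        ring1
    · rw [dif_neg hi1]
      simp only [smat, Matrix.of_apply, Fin.val_mk]
      rcases show (0:ℕ) < ↑i ∨ (i:ℕ) = 0 by omega with hc | hc
      · rw [if_neg (by omega : ¬ ((i:ℕ) ≤ ↑j))]
        simp
      · rw [if_pos (by omega : (i:ℕ) ≤ ↑j)]
        field_simp
        ring1


lemma smat_det_ne_zero {lam : ℂ} (hlam0 : lam ≠ 0) : (smat lam n).det ≠ 0 := by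
  have htri : (smat lam n).BlockTriangular id := by
    intro i j hij
    simp only [smat, Matrix.of_apply]
    rw [if_neg]
    exact fun h => absurd (Fin.le_def.mpr h) (not_le.mpr hij)
  rw [Matrix.det_of_upperTriangular htri]
  apply Finset.prod_ne_zero_iff.mpr
  intro i _
  simp only [smat, Matrix.of_apply, if_pos (le_refl (i:ℕ)), Nat.sub_self,
    Nat.choose_zero_right, Nat.cast_one, mul_one]
  exact mul_ne_zero (pow_ne_zero _ (by norm_num)) (pow_ne_zero _ hlam0)

lemma jordan_det (mu : ℂ) : (jordanBlock mu n).det = mu ^ n := by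
  have htri : (jordanBlock mu n).BlockTriangular id := by
    intro i j hij
    have hji : (j:ℕ) < (i:ℕ) := hij
    simp only [jordanBlock, Matrix.of_apply]
    rw [if_neg (by omega : ¬ ((j:ℕ) = (i:ℕ))), if_neg (by omega : ¬ ((j:ℕ) = (i:ℕ) + 1))]
  rw [Matrix.det_of_upperTriangular htri]
  simp [jordanBlock]

lemma key2 {lam : ℂ} (hlam0 : lam ≠ 0) :
    jordanBlock lam⁻¹ n * (smat lam n)⁻¹ * jordanBlock lam n = (smat lam n)⁻¹ := by
  have hA : IsUnit (jordanBlock lam n).det := by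
    rw [jordan_det]; exact (pow_ne_zero _ hlam0).isUnit
  have hA' : IsUnit (jordanBlock lam⁻¹ n).det := by
    rw [jordan_det]; exact (pow_ne_zero _ (inv_ne_zero hlam0)).isUnit
  calc jordanBlock lam⁻¹ n * (smat lam n)⁻¹ * jordanBlock lam n
      = jordanBlock lam⁻¹ n * (jordanBlock lam n * smat lam n * jordanBlock lam⁻¹ n)⁻¹
          * jordanBlock lam n := by rw [key hlam0]
    _ = jordanBlock lam⁻¹ n * ((jordanBlock lam⁻¹ n)⁻¹ *
          ((smat lam n)⁻¹ * (jordanBlock lam n)⁻¹)) * jordanBlock lam n := by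
        rw [Matrix.mul_inv_rev, Matrix.mul_inv_rev]
    _ = ((smat lam n)⁻¹ * (jordanBlock lam n)⁻¹) * jordanBlock lam n := by
        rw [Matrix.mul_nonsing_inv_cancel_left _ _ hA']
    _ = (smat lam n)⁻¹ := Matrix.nonsing_inv_mul_cancel_right _ _ hA

lemma vanish (mu nu : ℂ) (h1 : mu * nu ≠ 1) (M : Matrix (Fin n) (Fin n) ℂ)
    (h : jordanBlock mu n * M * jordanBlock nu n = M) : M = 0 := by
  suffices H : ∀ m : ℕ, ∀ i j : Fin n, (n - 1 - (i:ℕ)) + (j:ℕ) ≤ m → M i j = 0 by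
    ext i j
    exact H _ i j le_rfl
  intro m
  induction m with
  | zero =>
    intro i j hm
    have hi := i.isLt
    have hj := j.isLt
    have heq : (jordanBlock mu n * M * jordanBlock nu n) i j = M i j := by rw [h]
    rw [mul_jordan_apply, jordan_mul_apply, if_neg (by omega : ¬ (0 < (j:ℕ))),
      dif_neg (by omega : ¬ ((i:ℕ) + 1 < n))] at heq
    have h2 : (mu * nu - 1) * M i j = 0 := by linear_combination heq
    rcases mul_eq_zero.mp h2 with h3 | h3
    · exact absurd (sub_eq_zero.mp h3) h1
    · exact h3
  | succ m ih =>
    intro i j hm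
    have hi := i.isLt
    have hj := j.isLt
    have heq : (jordanBlock mu n * M * jordanBlock nu n) i j = M i j := by rw [h]
    rw [mul_jordan_apply] at heq
    by_cases hj1 : 0 < (j:ℕ)
    · rw [if_pos hj1, jordan_mul_apply, jordan_mul_apply] at heq
      by_cases hi1 : (i:ℕ) + 1 < n
      · rw [dif_pos hi1, dif_pos hi1,
          ih ⟨(i:ℕ)+1, hi1⟩ j (by simpa using by omega : _),
          ih i ⟨(j:ℕ)-1, by omega⟩ (by simpa using by omega : _),
          ih ⟨(i:ℕ)+1, hi1⟩ ⟨(j:ℕ)-1, by omega⟩ (by simpa using by omega : _)] at heq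
        have h2 : (mu * nu - 1) * M i j = 0 := by linear_combination heq
        rcases mul_eq_zero.mp h2 with h3 | h3
        · exact absurd (sub_eq_zero.mp h3) h1
        · exact h3
      · rw [dif_neg hi1, dif_neg hi1,
          ih i ⟨(j:ℕ)-1, by omega⟩ (by simpa using by omega : _)] at heq
        have h2 : (mu * nu - 1) * M i j = 0 := by linear_combination heq
        rcases mul_eq_zero.mp h2 with h3 | h3
        · exact absurd (sub_eq_zero.mp h3) h1
        · exact h3
    · rw [if_neg hj1, jordan_mul_apply] at heq
      by_cases hi1 : (i:ℕ) + 1 < n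
      · rw [dif_pos hi1, ih ⟨(i:ℕ)+1, hi1⟩ j (by simpa using by omega : _)] at heq
        have h2 : (mu * nu - 1) * M i j = 0 := by linear_combination heq
        rcases mul_eq_zero.mp h2 with h3 | h3
        · exact absurd (sub_eq_zero.mp h3) h1
        · exact h3
      · rw [dif_neg hi1] at heq
        have h2 : (mu * nu - 1) * M i j = 0 := by linear_combination heq
        rcases mul_eq_zero.mp h2 with h3 | h3
        · exact absurd (sub_eq_zero.mp h3) h1
        · exact h3


lemma listprod_swap_apply (L : List (Fin n)) (hL : L.Nodup) (x : Fin n ⊕ Fin n) :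
    ((L.map fun i => Equiv.swap (Sum.inl i) (Sum.inr i)).prod : Equiv.Perm (Fin n ⊕ Fin n)) x
      = (match x with
        | Sum.inl j => if j ∈ L then Sum.inr j else Sum.inl j
        | Sum.inr j => if j ∈ L then Sum.inl j else Sum.inr j) := by
  induction L with
  | nil => cases x <;> simp
  | cons a L ih =>
    have hna : a ∉ L := (List.nodup_cons.mp hL).1
    have hnd : L.Nodup := (List.nodup_cons.mp hL).2
    rw [List.map_cons, List.prod_cons, Equiv.Perm.mul_apply, ih hnd]
    cases x with
    | inl j =>
      by_cases hjL : j ∈ L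
      · have hja : j ≠ a := fun h => hna (h ▸ hjL)
        simp only [if_pos hjL, if_pos (List.mem_cons.mpr (Or.inr hjL))]
        exact Equiv.swap_apply_of_ne_of_ne (by simp) (by simp [hja])
      · by_cases hja : j = a
        · subst hja
          simp only [if_neg hjL, if_pos ((List.mem_cons_self : j ∈ j :: L))]
          exact Equiv.swap_apply_left _ _
        · simp only [if_neg hjL, if_neg (by simp [hja, hjL] : ¬ j ∈ a :: L)]
          exact Equiv.swap_apply_of_ne_of_ne (by simp [hja]) (by simp)
    | inr j =>
      by_cases hjL : j ∈ L
      · have hja : j ≠ a := fun h => hna (h ▸ hjL)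
        simp only [if_pos hjL, if_pos (List.mem_cons.mpr (Or.inr hjL))]
        exact Equiv.swap_apply_of_ne_of_ne (by simp [hja]) (by simp)
      · by_cases hja : j = a
        · subst hja
          simp only [if_neg hjL, if_pos ((List.mem_cons_self : j ∈ j :: L))]
          exact Equiv.swap_apply_right _ _
        · simp only [if_neg hjL, if_neg (by simp [hja, hjL] : ¬ j ∈ a :: L)]
          exact Equiv.swap_apply_of_ne_of_ne (by simp) (by simp [hja])

lemma sign_sumComm :
    Equiv.Perm.sign (Equiv.sumComm (Fin n) (Fin n) : Equiv.Perm (Fin n ⊕ Fin n)) = (-1) ^ n := by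
  have hprod : ((List.finRange n).map
      (fun i => Equiv.swap (Sum.inl i) (Sum.inr i) : Fin n → Equiv.Perm (Fin n ⊕ Fin n))).prod
      = (Equiv.sumComm (Fin n) (Fin n) : Equiv.Perm (Fin n ⊕ Fin n)) := by
    apply Equiv.ext
    intro x
    rw [listprod_swap_apply _ (List.nodup_finRange n) x]
    cases x <;> simp [List.mem_finRange]
  rw [← hprod, Equiv.Perm.sign_prod_list_swap, List.length_map, List.length_finRange]
  intro g hg
  obtain ⟨i, _, rfl⟩ := List.mem_map.mp hg
  exact ⟨_, _, by simp, rfl⟩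

lemma det_fromBlocks_anti (Q R : Matrix (Fin n) (Fin n) ℂ) :
    (Matrix.fromBlocks 0 Q R 0).det = (-1) ^ n * (Q.det * R.det) := by
  have hJ : (Matrix.fromBlocks (0 : Matrix (Fin n) (Fin n) ℂ) (1 : Matrix (Fin n) (Fin n) ℂ)
        (1 : Matrix (Fin n) (Fin n) ℂ) (0 : Matrix (Fin n) (Fin n) ℂ))
      = (1 : Matrix (Fin n ⊕ Fin n) (Fin n ⊕ Fin n) ℂ).submatrix id
          ⇑(Equiv.sumComm (Fin n) (Fin n) : Equiv.Perm (Fin n ⊕ Fin n)) := by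
    ext (i | i) (j | j) <;> simp [Matrix.one_apply]
  have hdetJ : (Matrix.fromBlocks (0 : Matrix (Fin n) (Fin n) ℂ) (1 : Matrix (Fin n) (Fin n) ℂ)
        (1 : Matrix (Fin n) (Fin n) ℂ) (0 : Matrix (Fin n) (Fin n) ℂ)).det = (-1) ^ n := by
    rw [hJ, Matrix.det_permute', Matrix.det_one, mul_one, sign_sumComm]
    norm_num
  have hmul : Matrix.fromBlocks Q 0 0 R *
      Matrix.fromBlocks (0 : Matrix (Fin n) (Fin n) ℂ) (1 : Matrix (Fin n) (Fin n) ℂ)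
        (1 : Matrix (Fin n) (Fin n) ℂ) (0 : Matrix (Fin n) (Fin n) ℂ)
      = Matrix.fromBlocks 0 Q R 0 := by
    rw [Matrix.fromBlocks_multiply]
    simp
  rw [← hmul, Matrix.det_mul, hdetJ, Matrix.det_fromBlocks_zero₂₁]
  ring

end JordanAux

open JordanAux in
/-- For `λ ∉ {0, 1, -1}` and `B = J(λ,n) ⊕ J(λ⁻¹,n) ∈ SL(2n, ℂ)` (block diagonal, realized
over the index type `Fin n ⊕ Fin n`): `B` is always reversible in `SL(2n, ℂ)`, and `B` is
strongly reversible in `SL(2n, ℂ)` iff `n` is even. -/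
theorem jordan_pair_reversible_and_strongly_reversible_iff {n : ℕ} (hn : 1 ≤ n) (lam : ℂ)
    (hlam0 : lam ≠ 0) (hlam1 : lam ≠ 1) (hlam2 : lam ≠ -1)
    (hdet : (Matrix.fromBlocks (jordanBlock lam n) 0 0 (jordanBlock lam⁻¹ n)).det = 1)
    (B : Matrix.SpecialLinearGroup (Fin n ⊕ Fin n) ℂ)
    (hB : B = ⟨Matrix.fromBlocks (jordanBlock lam n) 0 0 (jordanBlock lam⁻¹ n), hdet⟩) :
    (∃ g : Matrix.SpecialLinearGroup (Fin n ⊕ Fin n) ℂ, g * B * g⁻¹ = B⁻¹) ∧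
    ((∃ g₁ g₂ : Matrix.SpecialLinearGroup (Fin n ⊕ Fin n) ℂ,
        g₁ * g₁ = 1 ∧ g₂ * g₂ = 1 ∧ B = g₁ * g₂) ↔ Even n) := by
  set A := jordanBlock lam n with hA
  set A' := jordanBlock lam⁻¹ n with hA'
  set S := smat lam n with hS
  have hBv : (B : Matrix (Fin n ⊕ Fin n) (Fin n ⊕ Fin n) ℂ) = Matrix.fromBlocks A 0 0 A' := by
    rw [hB]
  have hSdet : S.det ≠ 0 := smat_det_ne_zero hlam0
  have hSu : IsUnit S.det := hSdet.isUnit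
  have hSS : S * S⁻¹ = 1 := Matrix.mul_nonsing_inv _ hSu
  have hSS' : S⁻¹ * S = 1 := Matrix.nonsing_inv_mul _ hSu
  have hk : A * S * A' = S := key hlam0
  have hk2 : A' * S⁻¹ * A = S⁻¹ := key2 hlam0
  set g₀ : Matrix (Fin n ⊕ Fin n) (Fin n ⊕ Fin n) ℂ := Matrix.fromBlocks 0 S S⁻¹ 0 with hg₀
  have hg₀sq : g₀ * g₀ = 1 := by
    rw [hg₀, Matrix.fromBlocks_multiply]
    simp only [Matrix.mul_zero, Matrix.zero_mul, add_zero, zero_add, hSS, hSS']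
    exact Matrix.fromBlocks_one
  have hBg₀B : Matrix.fromBlocks A 0 0 A' * g₀ * Matrix.fromBlocks A 0 0 A' = g₀ := by
    rw [hg₀, Matrix.fromBlocks_multiply, Matrix.fromBlocks_multiply]
    simp only [Matrix.mul_zero, Matrix.zero_mul, add_zero, zero_add]
    rw [hk, hk2]
  have hg₀det : g₀.det = (-1) ^ n := by
    rw [hg₀, det_fromBlocks_anti, Matrix.det_nonsing_inv, Ring.inverse_eq_inv',
      mul_inv_cancel₀ hSdet, mul_one]
  constructor
  · -- reversibility
    obtain ⟨c, hc⟩ : ∃ c : ℂ, c ^ (n + n) = (-1 : ℂ) ^ n :=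
      IsAlgClosed.exists_pow_nat_eq _ (by omega)
    have hgdet : (c • g₀).det = 1 := by
      rw [Matrix.det_smul, hg₀det, show Fintype.card (Fin n ⊕ Fin n) = n + n by simp, hc,
        ← mul_pow]
      norm_num
    set G : Matrix.SpecialLinearGroup (Fin n ⊕ Fin n) ℂ := ⟨c • g₀, hgdet⟩ with hG
    have hBGB : B * G * B = G := by
      apply Subtype.ext
      show (B : Matrix _ _ ℂ) * (c • g₀) * (B : Matrix _ _ ℂ) = c • g₀
      rw [hBv, Matrix.mul_smul, Matrix.smul_mul, hBg₀B]
    have h2 : B * (G * B * G⁻¹) = 1 := by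
      rw [show B * (G * B * G⁻¹) = (B * G * B) * G⁻¹ from by group, hBGB]
      group
    exact ⟨G, eq_inv_of_mul_eq_one_right h2⟩
  · constructor
    · -- strongly reversible → Even n
      rintro ⟨g1, g2, h1, h2, h3⟩
      have hrev : B * g1 * B = g1 := by
        rw [h3, show g1 * g2 * g1 * (g1 * g2) = g1 * (g2 * (g1 * g1) * g2) from by group, h1,
          show g1 * (g2 * 1 * g2) = g1 * (g2 * g2) from by group, h2, mul_one]
      have hM : (B.val : Matrix (Fin n ⊕ Fin n) (Fin n ⊕ Fin n) ℂ) * g1.val * B.val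
          = g1.val := congrArg Subtype.val hrev
      have hMsq : (g1.val : Matrix (Fin n ⊕ Fin n) (Fin n ⊕ Fin n) ℂ) * g1.val = 1 :=
        congrArg Subtype.val h1
      set M : Matrix (Fin n ⊕ Fin n) (Fin n ⊕ Fin n) ℂ := g1.val with hMdef
      set P := M.toBlocks₁₁ with hP
      set Q := M.toBlocks₁₂ with hQ
      set R := M.toBlocks₂₁ with hR
      set T := M.toBlocks₂₂ with hT
      have hM' : M = Matrix.fromBlocks P Q R T := (Matrix.fromBlocks_toBlocks M).symm
      have hblocks : Matrix.fromBlocks (A * P * A) (A * Q * A') (A' * R * A) (A' * T * A')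
          = Matrix.fromBlocks P Q R T := by
        have h4 := hM
        rw [hBv, hM', Matrix.fromBlocks_multiply, Matrix.fromBlocks_multiply] at h4
        simpa only [Matrix.mul_zero, Matrix.zero_mul, add_zero, zero_add] using h4
      have hll : lam * lam ≠ 1 := by
        intro hc
        rcases mul_self_eq_one_iff.mp hc with h | h
        · exact hlam1 h
        · exact hlam2 h
      have hll' : lam⁻¹ * lam⁻¹ ≠ 1 := by
        intro hc
        rcases mul_self_eq_one_iff.mp hc with h | h
        · exact hlam1 (by rw [← inv_inv lam, h, inv_one])
        · exact hlam2 (by rw [← inv_inv lam, h]; norm_num)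
      have hPzero : P = 0 := vanish lam lam hll P
        (by have := congrArg Matrix.toBlocks₁₁ hblocks
            simpa only [Matrix.toBlocks_fromBlocks₁₁] using this)
      have hTzero : T = 0 := vanish lam⁻¹ lam⁻¹ hll' T
        (by have := congrArg Matrix.toBlocks₂₂ hblocks
            simpa only [Matrix.toBlocks_fromBlocks₂₂] using this)
      have hM'' : M = Matrix.fromBlocks 0 Q R 0 := by rw [hM', hPzero, hTzero]
      have hQR : Q * R = 1 := by
        have h5 := hMsq
        rw [hM'', Matrix.fromBlocks_multiply, ← Matrix.fromBlocks_one] at h5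
        simp only [Matrix.mul_zero, Matrix.zero_mul, add_zero, zero_add] at h5
        have := congrArg Matrix.toBlocks₁₁ h5
        simpa only [Matrix.toBlocks_fromBlocks₁₁] using this
      have hMdet : M.det = 1 := g1.2
      rw [hM'', det_fromBlocks_anti, ← Matrix.det_mul, hQR, Matrix.det_one, mul_one] at hMdet
      by_contra hodd
      rw [Nat.not_even_iff_odd] at hodd
      rw [hodd.neg_one_pow] at hMdet
      norm_num at hMdet
    · -- Even n → strongly reversible
      intro hEven
      have hdet1 : g₀.det = 1 := by rw [hg₀det, hEven.neg_one_pow]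
      set G1 : Matrix.SpecialLinearGroup (Fin n ⊕ Fin n) ℂ := ⟨g₀, hdet1⟩ with hG1
      have hBG1B : B * G1 * B = G1 := by
        apply Subtype.ext
        show (B : Matrix _ _ ℂ) * g₀ * (B : Matrix _ _ ℂ) = g₀
        rw [hBv, hBg₀B]
      have hG1sq : G1 * G1 = 1 := by
        apply Subtype.ext
        show g₀ * g₀ = 1
        exact hg₀sq
      refine ⟨G1, G1 * B, hG1sq, ?_, ?_⟩
      · rw [show G1 * B * (G1 * B) = G1 * (B * G1 * B) from by group, hBG1B, hG1sq]
      · rw [← mul_assoc, hG1sq, one_mul]
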